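/- Let q ≥ 0 and W_1 = 0, W_{n+1} = γ_n W_n + σ² with γ_n = n/(n+q_n) where q_n ≥ q for all n ≥ n_0. Then limsup_{n→∞} W_n/n ≤ σ²/(q+1). -/
import Mathlib


open Filter

/-- If `W_1 = 0`, `W_{n+1} = γ_n W_n + σ²` with `γ_n = n/(n+q_n)` and `q_n ≥ q ≥ 0` for
all `n ≥ n_0`, then `limsup W_n / n ≤ σ²/(q+1)`. -/
theorem growing_limsup_bound (σ2 : ℝ) (hσ : 0 < σ2) (n0 : ℕ) (hn0 : 2 ≤ n0)
    (q : ℝ) (hq : 0 ≤ q) (qn : ℕ → ℝ) (hqn_pos : ∀ n, 0 < qn n)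
    (hqn : ∀ n ≥ n0, q ≤ qn n)
    (W : ℕ → ℝ) (hW1 : W 1 = 0)
    (hW : ∀ n ≥ 1, W (n + 1) = ((n : ℝ) / ((n : ℝ) + qn n)) * W n + σ2) :
    limsup (fun n : ℕ => W n / n) atTop ≤ σ2 / (q + 1) := by
  have hq1 : (0:ℝ) < q + 1 := by linarith
  set c : ℝ := σ2 / (q + 1) with hc_def
  have hc0 : 0 ≤ c := div_nonneg hσ.le hq1.le
  have hc : c * (q + 1) = σ2 := div_mul_cancel₀ _ hq1.ne'
  -- nonnegativity of W on n ≥ 1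
  have hWnn : ∀ n ≥ 1, 0 ≤ W n := by
    intro n hn
    induction n, hn using Nat.le_induction with
    | base => rw [hW1]
    | succ n hn ih =>
      rw [hW n hn]
      have hn' : (0:ℝ) < (n:ℝ) + qn n := by
        have := hqn_pos n
        positivity
      have : 0 ≤ (n : ℝ) / ((n:ℝ) + qn n) := by positivity
      nlinarith
  set C : ℝ := max σ2 (W n0 - c * n0) with hC_def
  have hCσ : σ2 ≤ C := le_max_left _ _
  have key : ∀ n ≥ n0, W n ≤ c * n + C := by
    intro n hn
    induction n, hn using Nat.le_induction with
    | base =>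
      have : W n0 - c * n0 ≤ C := le_max_right _ _
      linarith
    | succ n hn ih =>
      have hn1 : 1 ≤ n := le_trans (by omega) hn
      have hnpos : (0:ℝ) < n := by exact_mod_cast hn1
      have hq' : q ≤ qn n := hqn n hn
      have hd1 : (0:ℝ) < (n:ℝ) + q := by linarith
      have hd2 : (0:ℝ) < (n:ℝ) + qn n := by linarith
      have hWn : 0 ≤ W n := hWnn n hn1
      rw [hW n hn1]
      have hmono : (n:ℝ) / ((n:ℝ) + qn n) ≤ (n:ℝ) / ((n:ℝ) + q) :=
        div_le_div_of_nonneg_left hnpos.le hd1 (by linarith)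
      have h1 : (n:ℝ) / ((n:ℝ) + qn n) * W n ≤ (n:ℝ) / ((n:ℝ) + q) * W n :=
        mul_le_mul_of_nonneg_right hmono hWn
      have h2 : (n:ℝ) / ((n:ℝ) + q) * W n ≤ (n:ℝ) / ((n:ℝ) + q) * (c * n + C) :=
        mul_le_mul_of_nonneg_left ih (by positivity)
      have h3 : (n:ℝ) / ((n:ℝ) + q) * (c * n + C) + σ2 ≤ c * (n + 1) + C := by
        rw [div_mul_eq_mul_div, ← sub_nonneg]
        have hne : ((n:ℝ) + q) ≠ 0 := hd1.ne'
        have : c * (↑n + 1) + C - ((n:ℝ) * (c * ↑n + C) / (↑n + q) + σ2)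
            = ((c * (↑n + 1) + C - σ2) * (↑n + q) - (n:ℝ) * (c * ↑n + C)) / (↑n + q) := by
          field_simp
          ring
        rw [this]
        apply div_nonneg _ hd1.le
        nlinarith [mul_nonneg hq hc0]
      push_cast
      push_cast at h3
      linarith
  -- comparison of limsups
  have hbound : ∀ᶠ n : ℕ in atTop, W n / n ≤ c + C / n := by
    filter_upwards [eventually_ge_atTop n0] with n hn
    have hn1 : 1 ≤ n := le_trans (by omega) hn
    have hnpos : (0:ℝ) < n := by exact_mod_cast hn1
    rw [div_le_iff₀ hnpos]
    have := key n hn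
    have : (c + C / n) * n = c * n + C := by field_simp
    rw [this]
    exact key n hn
  have htend : Tendsto (fun n : ℕ => c + C / n) atTop (nhds c) := by
    have := tendsto_const_nhds (x := c) (f := atTop (α := ℕ)) |>.add
      (tendsto_const_div_atTop_nhds_zero_nat C)
    simpa using this
  have hf_cobdd : IsCoboundedUnder (· ≤ ·) atTop (fun n : ℕ => W n / n) := by
    apply Filter.isCoboundedUnder_le_of_eventually_le (x := 0) atTop
    filter_upwards [eventually_ge_atTop 1] with n hn
    have hnpos : (0:ℝ) < n := by exact_mod_cast hn
    exact div_nonneg (hWnn n hn) hnpos.le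
  have hg_bdd : IsBoundedUnder (· ≤ ·) atTop (fun n : ℕ => c + C / n) :=
    htend.isBoundedUnder_le
  calc limsup (fun n : ℕ => W n / n) atTop
      ≤ limsup (fun n : ℕ => c + C / n) atTop := limsup_le_limsup hbound hf_cobdd hg_bdd
    _ = c := htend.limsup_eq
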